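/- Let M and K be symmetric positive definite real n×n matrices and let α, β, κ > 0 be real parameters. Set A := β M, B := κ K and C := α^{-1} M. Then the second block of the interpolation preconditioner at θ = 1/2 has the explicit form C + [C, B A^{-1} Bᵀ]_{1/2} = α^{-1} M + (α β)^{-1/2} κ K, and this equals (α β)^{-1} (β M + (α β)^{1/2} κ K), i.e. (α β)^{-1} times the first preconditioner block A + [A, Bᵀ C^{-1} B]_{1/2}. -/

import Mathlib

open Matrix

/-- Real power of a real square matrix, via the continuous functional calculus
(spectral decomposition); junk value if the matrix is not selfadjoint. -/
noncomputable def mrpow {n : ℕ} (S : Matrix (Fin n) (Fin n) ℝ) (r : ℝ) :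
    Matrix (Fin n) (Fin n) ℝ :=
  cfc (fun x : ℝ => x ^ r) S

/-- The square root `M^{1/2}`. -/
noncomputable def msqrt {n : ℕ} (S : Matrix (Fin n) (Fin n) ℝ) : Matrix (Fin n) (Fin n) ℝ :=
  mrpow S (1 / 2)

/-- The interpolation `[V, W]_θ := V^{1/2} (V^{-1/2} W V^{-1/2})^θ V^{1/2}`,
where `V^{-1/2}` is the inverse of `V^{1/2}`. -/
noncomputable def interp {n : ℕ} (V W : Matrix (Fin n) (Fin n) ℝ) (θ : ℝ) :
    Matrix (Fin n) (Fin n) ℝ :=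
  msqrt V * mrpow ((msqrt V)⁻¹ * W * (msqrt V)⁻¹) θ * msqrt V

variable {n : ℕ}

lemma posDef_conj_hermitian {A S : Matrix (Fin n) (Fin n) ℝ} (hA : A.PosDef)
    (hS : S.IsHermitian) (hS' : IsUnit S.det) : (S * A * S).PosDef := by
  have hrw : S * A * S = Sᴴ * A * S := by rw [hS.eq]
  constructor
  · rw [hrw]; exact isHermitian_conjTranspose_mul_mul S hA.1
  · intro x hx
    have hinj : Function.Injective (S.mulVec) :=
      mulVec_injective_iff_isUnit.2 ((isUnit_iff_isUnit_det S).2 hS')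
    rw [hrw]
    exact (hA.conjTranspose_mul_mul_same hinj).2 hx

lemma spectrum_pos_of_posDef {A : Matrix (Fin n) (Fin n) ℝ} (hA : A.PosDef) :
    ∀ x ∈ spectrum ℝ A, 0 < x := by
  rw [hA.1.spectrum_real_eq_range_eigenvalues]
  rintro x ⟨i, rfl⟩
  exact hA.eigenvalues_pos i

lemma contOn_rpow_of_pos {s : Set ℝ} (hs : ∀ x ∈ s, 0 < x) (r : ℝ) :
    ContinuousOn (fun x : ℝ => x ^ r) s :=
  fun x hx => (Real.continuousAt_rpow_const x r (Or.inl (hs x hx).ne')).continuousWithinAt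

lemma msqrt_isHermitian (A : Matrix (Fin n) (Fin n) ℝ) : (msqrt A).IsHermitian :=
  (cfc_predicate (fun x : ℝ => x ^ ((1:ℝ)/2)) A : IsSelfAdjoint _)

lemma msqrt_mul_self {A : Matrix (Fin n) (Fin n) ℝ} (hA : A.PosDef) :
    msqrt A * msqrt A = A := by
  have hsp := spectrum_pos_of_posDef hA
  have hc := contOn_rpow_of_pos hsp (1/2 : ℝ)
  rw [msqrt, mrpow, ← cfc_mul _ _ A hc hc]
  calc cfc (fun x : ℝ => x ^ ((1:ℝ)/2) * x ^ ((1:ℝ)/2)) A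
      = cfc (id : ℝ → ℝ) A := by
        apply cfc_congr
        intro x hx
        show x ^ ((1:ℝ)/2) * x ^ ((1:ℝ)/2) = id x
        rw [← Real.rpow_add (hsp x hx)]
        norm_num
    _ = A := cfc_id ℝ A hA.1.isSelfAdjoint

lemma msqrt_det_isUnit {A : Matrix (Fin n) (Fin n) ℝ} (hA : A.PosDef) :
    IsUnit (msqrt A).det := by
  have h : (msqrt A).det * (msqrt A).det = A.det := by
    rw [← det_mul, msqrt_mul_self hA]
  refine isUnit_iff_ne_zero.2 fun h0 => ?_
  rw [h0, mul_zero] at h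
  exact hA.det_pos.ne' h.symm

lemma mrpow_smul {A : Matrix (Fin n) (Fin n) ℝ} (hA : A.PosDef) {c : ℝ} (hc : 0 < c) (r : ℝ) :
    mrpow (c • A) r = (c ^ r) • mrpow A r := by
  have hsp := spectrum_pos_of_posDef hA
  have himg : ∀ x ∈ (c * ·) '' spectrum ℝ A, 0 < x := by
    rintro x ⟨y, hy, rfl⟩; exact mul_pos hc (hsp y hy)
  rw [mrpow, ← cfc_comp_const_mul c (fun x : ℝ => x ^ r) A
      (contOn_rpow_of_pos himg r) hA.1.isSelfAdjoint]
  calc cfc (fun x : ℝ => (c * x) ^ r) A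
      = cfc (fun x : ℝ => c ^ r * x ^ r) A :=
        cfc_congr fun x hx => Real.mul_rpow hc.le (hsp x hx).le
    _ = (c ^ r) • cfc (fun x : ℝ => x ^ r) A :=
        cfc_const_mul (c ^ r) (fun x : ℝ => x ^ r) A
          (contOn_rpow_of_pos hsp r)
    _ = (c ^ r) • mrpow A r := rfl

lemma mrpow_sq_half {X : Matrix (Fin n) (Fin n) ℝ} (hX : X.PosDef) :
    mrpow (X * X) (1/2 : ℝ) = X := by
  have hsp := spectrum_pos_of_posDef hX
  have himg : ∀ x ∈ (· ^ (2:ℕ)) '' spectrum ℝ X, 0 < x := by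
    rintro x ⟨y, hy, rfl⟩; exact pow_pos (hsp y hy) 2
  rw [mrpow, ← sq, ← cfc_comp_pow (fun x : ℝ => x ^ ((1:ℝ)/2)) 2 X
      (contOn_rpow_of_pos himg _) hX.1.isSelfAdjoint]
  calc cfc (fun x : ℝ => (x ^ (2:ℕ)) ^ ((1:ℝ)/2)) X
      = cfc (id : ℝ → ℝ) X := by
        apply cfc_congr
        intro x hx
        have hx0 := (hsp x hx).le
        show (x ^ (2:ℕ)) ^ ((1:ℝ)/2) = id x
        rw [← Real.rpow_natCast x 2, ← Real.rpow_mul hx0]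
        norm_num
    _ = X := cfc_id ℝ X hX.1.isSelfAdjoint


lemma interp_half_smul {M K : Matrix (Fin n) (Fin n) ℝ} (hM : M.PosDef) (hK : K.PosDef)
    {v w : ℝ} (hv : 0 < v) (hw : 0 < w) :
    interp (v • M) (w • (K * M⁻¹ * K)) (1 / 2) = ((v * w) ^ ((1:ℝ)/2)) • K := by
  have hSS : msqrt M * msqrt M = M := msqrt_mul_self hM
  set S := msqrt M with hSdef
  have hSherm : S.IsHermitian := msqrt_isHermitian M
  have hSdet : IsUnit S.det := msqrt_det_isUnit hM
  have hSinv : S⁻¹ * S = 1 := nonsing_inv_mul S hSdet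
  have hSinv' : S * S⁻¹ = 1 := mul_nonsing_inv S hSdet
  have hMinv : M⁻¹ = S⁻¹ * S⁻¹ := by rw [← hSS, Matrix.mul_inv_rev]
  have hSinvherm : (S⁻¹).IsHermitian := hSherm.inv
  have hSinvdet : IsUnit (S⁻¹).det := isUnit_nonsing_inv_det S hSdet
  have hXpd : (S⁻¹ * K * S⁻¹).PosDef := posDef_conj_hermitian hK hSinvherm hSinvdet
  set X := S⁻¹ * K * S⁻¹ with hXdef
  have hv2 : v ^ ((1:ℝ)/2) * v ^ ((1:ℝ)/2) = v := by
    rw [← Real.rpow_add hv]; norm_num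
  have hvpow : 0 < v ^ ((1:ℝ)/2) := Real.rpow_pos_of_pos hv _
  have h1 : msqrt (v • M) = (v ^ ((1:ℝ)/2)) • S := mrpow_smul hM hv _
  have h1' : (msqrt (v • M))⁻¹ = (v ^ ((1:ℝ)/2))⁻¹ • S⁻¹ := by
    rw [h1]
    apply Matrix.inv_eq_right_inv
    rw [smul_mul_smul_comm, hSinv', mul_inv_cancel₀ hvpow.ne', one_smul]
  have hmat : S⁻¹ * (K * (S⁻¹ * S⁻¹) * K) * S⁻¹ = X * X := by
    rw [hXdef]; simp only [Matrix.mul_assoc]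
  have hinner : (msqrt (v • M))⁻¹ * (w • (K * M⁻¹ * K)) * (msqrt (v • M))⁻¹
      = (v⁻¹ * w) • (X * X) := by
    rw [h1', hMinv]
    simp only [smul_mul_assoc, mul_smul_comm, smul_smul]
    rw [hmat]
    congr 1
    have ha := hvpow.ne'
    have hv0 := hv.ne'
    field_simp
    rw [sq]; exact hv2.symm
  have hXdet : IsUnit X.det := isUnit_iff_ne_zero.2 hXpd.det_pos.ne'
  have hXXpd : (X * X).PosDef := by
    simpa using posDef_conj_hermitian Matrix.PosDef.one hXpd.1 hXdet
  have h2 : mrpow ((v⁻¹ * w) • (X * X)) (1 / 2) = ((v⁻¹ * w) ^ ((1:ℝ)/2)) • X := by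
    rw [mrpow_smul hXXpd (by positivity), mrpow_sq_half hXpd]
  have hSXS : S * X * S = K := by
    calc S * X * S = (S * S⁻¹) * K * (S⁻¹ * S) := by
          rw [hXdef]; simp only [Matrix.mul_assoc]
      _ = K := by rw [hSinv', hSinv, Matrix.one_mul, Matrix.mul_one]
  have hscal2 : (v * w) ^ ((1:ℝ)/2) = v ^ ((1:ℝ)/2) * ((v⁻¹ * w) ^ ((1:ℝ)/2) * v ^ ((1:ℝ)/2)) := by
    have h3 : v * w = (v * v) * (v⁻¹ * w) := by field_simp
    rw [h3, Real.mul_rpow (by positivity) (by positivity),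
      Real.mul_rpow hv.le hv.le]
    ring
  rw [interp, hinner, h2, h1]
  simp only [smul_mul_assoc, mul_smul_comm, smul_smul]
  rw [hSXS]
  congr 1
  rw [hscal2]

/-- With `A = β M`, `B = κ K`, `C = α⁻¹ M` (for `M`, `K` symmetric positive definite and
`α, β, κ > 0`), the second block of the interpolation preconditioner at `θ = 1/2` is
`C + [C, B A⁻¹ Bᵀ]_{1/2} = α⁻¹ M + (α β)^{-1/2} κ K`, and this equals
`(α β)⁻¹ (β M + (α β)^{1/2} κ K)`, i.e. `(α β)⁻¹` times the first block
`A + [A, Bᵀ C⁻¹ B]_{1/2}`. -/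
theorem second_preconditioner_block {n : ℕ} (M K : Matrix (Fin n) (Fin n) ℝ)
    (hM : M.PosDef) (hK : K.PosDef) (α β κ : ℝ) (hα : 0 < α) (hβ : 0 < β) (hκ : 0 < κ)
    (A B C : Matrix (Fin n) (Fin n) ℝ)
    (hA : A = β • M) (hB : B = κ • K) (hC : C = α⁻¹ • M) :
    C + interp C (B * A⁻¹ * Bᵀ) (1 / 2) =
        α⁻¹ • M + ((α * β) ^ (-(1 : ℝ) / 2) * κ) • K ∧
    C + interp C (B * A⁻¹ * Bᵀ) (1 / 2) =
        (α * β)⁻¹ • (β • M + ((α * β) ^ ((1 : ℝ) / 2) * κ) • K) ∧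
    C + interp C (B * A⁻¹ * Bᵀ) (1 / 2) =
        (α * β)⁻¹ • (A + interp A (Bᵀ * C⁻¹ * B) (1 / 2)) := by
  have hMdet : IsUnit M.det := isUnit_iff_ne_zero.2 hM.det_pos.ne'
  have hab : (0:ℝ) < α * β := mul_pos hα hβ
  have hKt : Kᵀ = K := by
    ext i j
    have := congrFun (congrFun hK.1 i) j
    simpa using this
  have hMinv_smul : ∀ (c : ℝ), 0 < c → (c • M)⁻¹ = c⁻¹ • M⁻¹ := by
    intro c hc
    apply Matrix.inv_eq_right_inv
    rw [smul_mul_smul_comm, mul_inv_cancel₀ hc.ne', mul_nonsing_inv M hMdet, one_smul]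
  have hW1 : B * A⁻¹ * Bᵀ = (κ * β⁻¹ * κ) • (K * M⁻¹ * K) := by
    rw [hA, hB, Matrix.transpose_smul, hKt, hMinv_smul β hβ]
    simp only [smul_mul_assoc, mul_smul_comm, smul_smul]
    congr 1
    ring
  have hW2 : Bᵀ * C⁻¹ * B = (κ * α * κ) • (K * M⁻¹ * K) := by
    rw [hB, hC, Matrix.transpose_smul, hKt, hMinv_smul α⁻¹ (by positivity), inv_inv]
    simp only [smul_mul_assoc, mul_smul_comm, smul_smul]
    congr 1
    ring
  have hI1 : interp C (B * A⁻¹ * Bᵀ) (1 / 2)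
      = ((α⁻¹ * (κ * β⁻¹ * κ)) ^ ((1:ℝ)/2)) • K := by
    rw [hC, hW1]
    exact interp_half_smul hM hK (by positivity) (by positivity)
  have hI2 : interp A (Bᵀ * C⁻¹ * B) (1 / 2)
      = ((β * (κ * α * κ)) ^ ((1:ℝ)/2)) • K := by
    rw [hA, hW2]
    exact interp_half_smul hM hK hβ (by positivity)
  have hκ2 : κ ^ ((1:ℝ)/2) * κ ^ ((1:ℝ)/2) = κ := by
    rw [← Real.rpow_add hκ]; norm_num
  have hab2 : (α*β) ^ ((1:ℝ)/2) * (α*β) ^ ((1:ℝ)/2) = α*β := by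
    rw [← Real.rpow_add hab]; norm_num
  have hs1 : (α⁻¹ * (κ * β⁻¹ * κ)) ^ ((1:ℝ)/2) = (α * β) ^ (-(1:ℝ)/2) * κ := by
    have h4 : α⁻¹ * (κ * β⁻¹ * κ) = (α * β)⁻¹ * (κ * κ) := by
      field_simp
    rw [h4, Real.mul_rpow (by positivity) (by positivity),
        Real.inv_rpow hab.le, Real.mul_rpow hκ.le hκ.le, hκ2,
        show -(1:ℝ)/2 = -((1:ℝ)/2) by norm_num, Real.rpow_neg hab.le]
  have hs2 : (β * (κ * α * κ)) ^ ((1:ℝ)/2) = (α * β) ^ ((1:ℝ)/2) * κ := by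
    have h4 : β * (κ * α * κ) = (α * β) * (κ * κ) := by ring
    rw [h4, Real.mul_rpow hab.le (by positivity), Real.mul_rpow hκ.le hκ.le, hκ2]
  have hsc3 : (α*β)⁻¹ * β = α⁻¹ := by
    field_simp
  have hsc4 : (α*β)⁻¹ * ((α*β) ^ ((1:ℝ)/2) * κ) = (α*β) ^ (-(1:ℝ)/2) * κ := by
    rw [show -(1:ℝ)/2 = -((1:ℝ)/2) by norm_num, Real.rpow_neg hab.le]
    have h5 : ((α*β) ^ ((1:ℝ)/2)) ≠ 0 := by positivity
    field_simp
    linear_combination hab2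
  have eq2 : (α*β)⁻¹ • (β • M + ((α*β) ^ ((1:ℝ)/2) * κ) • K)
      = α⁻¹ • M + ((α*β) ^ (-(1:ℝ)/2) * κ) • K := by
    rw [smul_add, smul_smul, smul_smul, hsc3, hsc4]
  have key : C + interp C (B * A⁻¹ * Bᵀ) (1 / 2)
      = α⁻¹ • M + ((α * β) ^ (-(1:ℝ)/2) * κ) • K := by
    rw [hI1, hs1, hC]
  refine ⟨key, ?_, ?_⟩
  · rw [key]; exact eq2.symm
  · rw [key, hI2, hs2, hA]; exact eq2.symm
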